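/- Let (z₁, z₂) ∈ ℂ² with (z₁, z₂) ≠ (0, 0). If φ ∈ ℝ satisfies |z₁|² · |a|^(−2φ) + |z₂|² · |b|^(−2φ) = 1 and φ' ∈ ℝ satisfies |a·z₁|² · |a|^(−2φ') + |b·z₂|² · |b|^(−2φ') = 1, then φ' = φ + 1. -/

import Mathlib

/-- If `φ` solves the defining equation for `(z₁, z₂)` and `φ'` solves it for
`(a z₁, b z₂)`, then `φ' = φ + 1`. -/
theorem stmt5 (a b : ℂ) (ha : 1 < ‖a‖) (hb : 1 < ‖b‖)
    (z : ℂ × ℂ) (hz : z ≠ 0) (φ φ' : ℝ)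
    (hφ : ‖z.1‖ ^ 2 * ‖a‖ ^ (-(2 * φ)) +
      ‖z.2‖ ^ 2 * ‖b‖ ^ (-(2 * φ)) = 1)
    (hφ' : ‖a * z.1‖ ^ 2 * ‖a‖ ^ (-(2 * φ')) +
      ‖b * z.2‖ ^ 2 * ‖b‖ ^ (-(2 * φ')) = 1) :
    φ' = φ + 1 := by
  set A := ‖a‖ with hAdef
  set B := ‖b‖ with hBdef
  have hA0 : (0:ℝ) < A := lt_trans one_pos ha
  have hB0 : (0:ℝ) < B := lt_trans one_pos hb
  -- rewrite hφ' in terms of ψ := φ' - 1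
  have hψ : ‖z.1‖ ^ 2 * A ^ (-(2 * (φ' - 1))) +
      ‖z.2‖ ^ 2 * B ^ (-(2 * (φ' - 1))) = 1 := by
    have h1 : A ^ (-(2 * (φ' - 1))) = A ^ (2:ℝ) * A ^ (-(2 * φ')) := by
      rw [← Real.rpow_add hA0]; ring_nf
    have h2 : B ^ (-(2 * (φ' - 1))) = B ^ (2:ℝ) * B ^ (-(2 * φ')) := by
      rw [← Real.rpow_add hB0]; ring_nf
    have hA2 : A ^ (2:ℝ) = A ^ (2:ℕ) := by
      rw [show ((2:ℝ)) = ((2:ℕ):ℝ) by norm_num, Real.rpow_natCast]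
    have hB2 : B ^ (2:ℝ) = B ^ (2:ℕ) := by
      rw [show ((2:ℝ)) = ((2:ℕ):ℝ) by norm_num, Real.rpow_natCast]
    rw [h1, h2, hA2, hB2]
    calc ‖z.1‖ ^ 2 * (A ^ 2 * A ^ (-(2 * φ'))) +
        ‖z.2‖ ^ 2 * (B ^ 2 * B ^ (-(2 * φ')))
        = ‖a * z.1‖ ^ 2 * A ^ (-(2 * φ')) +
          ‖b * z.2‖ ^ 2 * B ^ (-(2 * φ')) := by
          simp only [norm_mul, ← hAdef, ← hBdef]; ring
      _ = 1 := hφ'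
  -- strict antitonicity
  have hzne : ‖z.1‖ ≠ 0 ∨ ‖z.2‖ ≠ 0 := by
    by_contra h
    push_neg at h
    apply hz
    have h1 : z.1 = 0 := by simpa using h.1
    have h2 : z.2 = 0 := by simpa using h.2
    exact Prod.ext h1 h2
  have key : ∀ x y : ℝ, x < y →
      ‖z.1‖ ^ 2 * A ^ (-(2 * y)) + ‖z.2‖ ^ 2 * B ^ (-(2 * y)) <
      ‖z.1‖ ^ 2 * A ^ (-(2 * x)) + ‖z.2‖ ^ 2 * B ^ (-(2 * x)) := by
    intro x y hxy
    have hexp : -(2 * y) < -(2 * x) := by linarith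
    have hAlt : A ^ (-(2 * y)) < A ^ (-(2 * x)) :=
      Real.rpow_lt_rpow_left_iff ha |>.mpr hexp
    have hBlt : B ^ (-(2 * y)) < B ^ (-(2 * x)) :=
      Real.rpow_lt_rpow_left_iff hb |>.mpr hexp
    rcases hzne with h1 | h2
    · have hp : (0:ℝ) < ‖z.1‖ ^ 2 :=
        pow_pos ((norm_nonneg _).lt_of_ne (Ne.symm h1)) 2
      have := mul_lt_mul_of_pos_left hAlt hp
      have h2le := mul_le_mul_of_nonneg_left hBlt.le (sq_nonneg (‖z.2‖))
      linarith
    · have hp : (0:ℝ) < ‖z.2‖ ^ 2 :=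
        pow_pos ((norm_nonneg _).lt_of_ne (Ne.symm h2)) 2
      have := mul_lt_mul_of_pos_left hBlt hp
      have h1le := mul_le_mul_of_nonneg_left hAlt.le (sq_nonneg (‖z.1‖))
      linarith
  rcases lt_trichotomy (φ' - 1) φ with h | h | h
  · have := key _ _ h; rw [hψ, hφ] at this; linarith
  · linarith
  · have := key _ _ h; rw [hψ, hφ] at this; linarith
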